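/- If V is a K[G]-submodule of a left K[G]-module N and V is free of finite rank as a K[G]-module, then V is a direct summand of N as a K[G]-module. -/

import Mathlib

open MonoidAlgebra Finset

lemma finsupp_sum_univ_single {G K : Type} [Fintype G] [DecidableEq G] [Semiring K]
    (f : G →₀ K) : (∑ g : G, Finsupp.single g (f g)) = f := by
  ext x
  rw [Finsupp.finset_sum_apply]
  simp [Finsupp.single_apply, Finset.sum_ite_eq']

/-- Let `G` be a finite group, `K` a field, `N` a left `K[G]`-module and `V` a
`K[G]`-submodule of `N`.  If `V` is free of finite rank as a `K[G]`-module then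
`V` is a direct summand of `N`. -/
theorem stmt3 (K : Type) [Field K] (G : Type) [Group G] [Fintype G]
    (N : Type) [AddCommGroup N] [Module (MonoidAlgebra K G) N]
    (V : Submodule (MonoidAlgebra K G) N)
    (hfree : Module.Free (MonoidAlgebra K G) V)
    (hfin : Module.Finite (MonoidAlgebra K G) V) :
    ∃ W : Submodule (MonoidAlgebra K G) N, IsCompl V W := by
  classical
  set A := MonoidAlgebra K G with hA
  letI : Module K N := Module.compHom N (algebraMap K A)
  have hTower : ∀ (k : K) (a : A) (n : N), (k • a) • n = k • (a • n) := by
    intro k a n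
    show (k • a) • n = (algebraMap K A k) • (a • n)
    rw [← mul_smul, Algebra.smul_def]
  letI : IsScalarTower K A N := ⟨hTower⟩
  let ι := Module.Free.ChooseBasisIndex A V
  let b : Module.Basis ι A V := Module.Free.chooseBasis A V
  let VK : Submodule K N := V.restrictScalars K
  -- the K-linear functionals on V
  let ψ : ι → (VK →ₗ[K] K) := fun i =>
    { toFun := fun v => (b.coord i ⟨v.1, show v.1 ∈ V from v.2⟩).coeff 1
      map_add' := by
        intro v w
        have : (⟨(v + w).1, show (v + w).1 ∈ V from (v + w).2⟩ : V) = ⟨v.1, show v.1 ∈ V from v.2⟩ + ⟨w.1, show w.1 ∈ V from w.2⟩ := rfl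
        rw [this, map_add]
        rfl
      map_smul' := by
        intro k v
        have : (⟨(k • v).1, show (k • v).1 ∈ V from (k • v).2⟩ : V) = (algebraMap K A k) • (⟨v.1, show v.1 ∈ V from v.2⟩ : V) := rfl
        rw [this, map_smul]
        show ((algebraMap K A k) * (b.coord i ⟨v.1, show v.1 ∈ V from v.2⟩)).coeff 1 = _
        show ((MonoidAlgebra.single (1 : G) k) * (b.coord i ⟨v.1, show v.1 ∈ V from v.2⟩)).coeff 1 = _
        rw [MonoidAlgebra.single_one_mul_apply]
        rfl }
  -- extend them K-linearly to N
  choose Ψ hΨ using fun i => LinearMap.exists_extend (ψ i)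
  have hΨ' : ∀ (i : ι) (x : N) (hx : x ∈ VK), Ψ i x = ψ i ⟨x, hx⟩ := by
    intro i x hx
    have := LinearMap.congr_fun (hΨ i) ⟨x, hx⟩
    simpa using this
  -- the coinduced coordinate maps
  let C : ι → N → A := fun i n =>
    ∑ g : G, MonoidAlgebra.single g (Ψ i ((MonoidAlgebra.single g⁻¹ (1 : K) : A) • n))
  have hCadd : ∀ i m n, C i (m + n) = C i m + C i n := by
    intro i m n
    simp only [C, smul_add, map_add]
    rw [← Finset.sum_add_distrib]
    simp [Finsupp.single_add]
  have hCzero : ∀ i, C i 0 = 0 := by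
    intro i
    simp [C]
  have hCsingle : ∀ (i : ι) (h : G) (c : K) (n : N),
      C i ((MonoidAlgebra.single h c : A) • n) = (MonoidAlgebra.single h c : A) * C i n := by
    intro i h c n
    have key : ∀ g : G, (MonoidAlgebra.single g⁻¹ (1 : K) : A) • (MonoidAlgebra.single h c : A) • n
        = c • ((MonoidAlgebra.single (g⁻¹ * h) (1 : K) : A) • n) := by
      intro g
      rw [← mul_smul, MonoidAlgebra.single_mul_single, one_mul]
      rw [← hTower]
      congr 1
      rw [MonoidAlgebra.smul_single', mul_one]
    calc C i ((MonoidAlgebra.single h c : A) • n)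
        = ∑ g : G, MonoidAlgebra.single g (c * Ψ i ((MonoidAlgebra.single (g⁻¹ * h) (1:K) : A) • n)) := by
          refine Finset.sum_congr rfl fun g _ => ?_
          rw [key g, map_smul]
          rfl
      _ = (MonoidAlgebra.single h c : A) * C i n := by
          rw [Finset.mul_sum]
          rw [← Equiv.sum_comp (Equiv.mulLeft h) (fun g => MonoidAlgebra.single g
            (c * Ψ i ((MonoidAlgebra.single (g⁻¹ * h) (1:K) : A) • n)))]
          refine Finset.sum_congr rfl fun g _ => ?_
          rw [MonoidAlgebra.single_mul_single]
          simp [mul_inv_rev]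
  have hCsmul : ∀ (i : ι) (a : A) (n : N), C i (a • n) = a * C i n := by
    intro i a n
    refine MonoidAlgebra.induction_linear (motive := fun a : A => C i (a • n) = a * C i n) a ?_ ?_ ?_
    · show C i ((0 : A) • n) = (0 : A) * C i n
      rw [zero_smul, hCzero, zero_mul]
    · intro f g hf hg
      rw [add_smul, hCadd, hf, hg, add_mul]
    · intro g r
      exact hCsingle i g r n
  -- the retraction
  let F : N →ₗ[A] V :=
    { toFun := fun n => ∑ i : ι, C i n • b i
      map_add' := by
        intro m n
        rw [← Finset.sum_add_distrib]
        refine Finset.sum_congr rfl fun i _ => ?_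
        rw [hCadd, add_smul]
      map_smul' := by
        intro a n
        rw [RingHom.id_apply, Finset.smul_sum]
        refine Finset.sum_congr rfl fun i _ => ?_
        rw [hCsmul, mul_smul] }
  have hproj : ∀ v : V, F v.1 = v := by
    intro v
    have hC : ∀ i : ι, C i v.1 = b.repr v i := by
      intro i
      have step : ∀ g : G, Ψ i ((MonoidAlgebra.single g⁻¹ (1 : K) : A) • v.1)
          = (b.repr v i).coeff g := by
        intro g
        have hmem : (MonoidAlgebra.single g⁻¹ (1 : K) : A) • v.1 ∈ VK :=
          show _ ∈ V from V.smul_mem _ v.2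
        rw [hΨ' i _ hmem]
        show (b.coord i ⟨(MonoidAlgebra.single g⁻¹ (1 : K) : A) • v.1, show _ ∈ V from hmem⟩).coeff 1 = _
        have : (⟨(MonoidAlgebra.single g⁻¹ (1 : K) : A) • v.1, show _ ∈ V from hmem⟩ : V)
            = (MonoidAlgebra.single g⁻¹ (1 : K) : A) • v := rfl
        rw [this, map_smul]
        show ((MonoidAlgebra.single g⁻¹ (1 : K) : A) * b.coord i v).coeff 1 = _
        rw [MonoidAlgebra.single_mul_apply]
        simp [Module.Basis.coord_apply]
      calc C i v.1 = ∑ g : G, MonoidAlgebra.single g ((b.repr v i).coeff g) := by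
            refine Finset.sum_congr rfl fun g _ => ?_
            rw [step g]
        _ = b.repr v i := MonoidAlgebra.coeff_injective (by
              rw [MonoidAlgebra.coeff_sum]; simp only [MonoidAlgebra.coeff_single]
              exact finsupp_sum_univ_single _)
    show (∑ i : ι, C i v.1 • b i) = v
    calc (∑ i : ι, C i v.1 • b i) = ∑ i : ι, b.repr v i • b i := by
          refine Finset.sum_congr rfl fun i _ => ?_
          rw [hC i]
      _ = v := b.sum_repr v
  exact ⟨LinearMap.ker F, LinearMap.isCompl_of_proj hproj⟩
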